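/- Let A ⊆ ℝⁿ with 0 ∈ closure(A \ {0}), and let LD(A) := {t·a : a ∈ D(A), t ≥ 0} be the tangent cone over the direction set. Then LD(A) satisfies condition (SSP): for every sequence a_m → 0 in ℝⁿ with a_m ≠ 0 and a_m/‖a_m‖ converging to a point of D(LD(A)), and for every ε > 0, there exist points b_m ∈ LD(A) with ‖a_m − b_m‖ ≤ ε·min(‖a_m‖, ‖b_m‖) for all sufficiently large m. -/

import Mathlib

open Filter Metric Topology MeasureTheory

noncomputable section

abbrev E (n : ℕ) := EuclideanSpace ℝ (Fin n)

/-- Direction set of `A` at the origin. -/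
def Dir (n : ℕ) (A : Set (E n)) : Set (E n) :=
  {a | ‖a‖ = 1 ∧ ∃ x : ℕ → E n, (∀ i, x i ∈ A \ {0}) ∧
    Tendsto x atTop (nhds (0 : E n)) ∧
    Tendsto (fun i => (‖x i‖)⁻¹ • x i) atTop (nhds a)}

/-- Sea-tangle neighbourhood of degree `d` and width `C`. -/
def STg (n : ℕ) (d C : ℝ) (A : Set (E n)) : Set (E n) :=
  {x | Metric.infDist x A ≤ C * ‖x‖ ^ d}

/-- Cone over the direction set (real tangent cone). -/
def LD (n : ℕ) (A : Set (E n)) : Set (E n) :=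
  {x | ∃ a ∈ Dir n A, ∃ t : ℝ, 0 ≤ t ∧ x = t • a}

/-- Sequence selection property. -/
def SSP (n : ℕ) (S : Set (E n)) : Prop :=
  ∀ a : ℕ → E n, (∀ m, a m ≠ 0) → Tendsto a atTop (nhds (0 : E n)) →
    (∃ L ∈ Dir n S, Tendsto (fun m => (‖a m‖)⁻¹ • a m) atTop (nhds L)) →
    ∀ ε > (0:ℝ), ∃ b : ℕ → E n, (∀ m, b m ∈ S) ∧
      ∀ᶠ m in atTop, ‖a m - b m‖ ≤ ε * min ‖a m‖ ‖b m‖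

/-- ST-equivalence of set-germs at the origin. -/
def STEquiv (n : ℕ) (A B : Set (E n)) : Prop :=
  ∃ d₁ > (1:ℝ), ∃ C₁ > (0:ℝ), ∃ d₂ > (1:ℝ), ∃ C₂ > (0:ℝ), ∃ ε > (0:ℝ),
    B ∩ ball (0 : E n) ε ⊆ STg n d₁ C₁ A ∧ A ∩ ball (0 : E n) ε ⊆ STg n d₂ C₂ B

lemma dir_limit {n : ℕ} {A : Set (E n)} {a : ℕ → E n} {L : E n}
    (ha : ∀ i, a i ∈ Dir n A) (hL : Tendsto a atTop (nhds L)) : L ∈ Dir n A := by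
  have hnorm : ‖L‖ = 1 := by
    have h1 : Tendsto (fun i => ‖a i‖) atTop (nhds ‖L‖) :=
      (continuous_norm.tendsto L).comp hL
    have h2 : (fun i => ‖a i‖) = fun _ => (1 : ℝ) := funext fun i => (ha i).1
    rw [h2] at h1
    exact tendsto_nhds_unique h1 tendsto_const_nhds
  choose x hx1 hx2 hx3 using fun i => (ha i).2
  have key : ∀ i : ℕ, ∃ j, ‖x i j‖ < 1 / (i + 1) ∧
      ‖(‖x i j‖)⁻¹ • x i j - a i‖ < 1 / (i + 1) := by
    intro i
    have hpos : (0 : ℝ) < 1 / (i + 1) := by positivity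
    have h1 : ∀ᶠ j in atTop, ‖x i j‖ < 1 / (i + 1) := by
      have := Metric.tendsto_nhds.mp (hx2 i) _ hpos
      filter_upwards [this] with j hj
      rwa [dist_zero_right] at hj
    have h2 : ∀ᶠ j in atTop, ‖(‖x i j‖)⁻¹ • x i j - a i‖ < 1 / (i + 1) := by
      have := Metric.tendsto_nhds.mp (hx3 i) _ hpos
      filter_upwards [this] with j hj
      rwa [dist_eq_norm] at hj
    exact (h1.and h2).exists
  choose j hj1 hj2 using key
  have htend : Tendsto (fun i : ℕ => 1 / ((i : ℝ) + 1)) atTop (nhds 0) :=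
    tendsto_one_div_add_atTop_nhds_zero_nat
  refine ⟨hnorm, fun i => x i (j i), fun i => hx1 i (j i), ?_, ?_⟩
  · exact squeeze_zero_norm (fun i => (hj1 i).le) htend
  · have hdiff : Tendsto (fun i => (‖x i (j i)‖)⁻¹ • x i (j i) - L) atTop (nhds 0) := by
      have hg : Tendsto (fun i : ℕ => 1 / ((i : ℝ) + 1) + ‖a i - L‖) atTop (nhds 0) := by
        have h2 : Tendsto (fun i => ‖a i - L‖) atTop (nhds 0) := by
          have h' : Tendsto (fun i => a i - L) atTop (nhds 0) := by
            simpa using hL.sub (tendsto_const_nhds (x := L))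
          simpa [Function.comp_def] using (continuous_norm.tendsto (0 : E n)).comp h'
        simpa using htend.add h2
      refine squeeze_zero_norm (fun i => ?_) hg
      calc ‖(‖x i (j i)‖)⁻¹ • x i (j i) - L‖
          ≤ ‖(‖x i (j i)‖)⁻¹ • x i (j i) - a i‖ + ‖a i - L‖ := by
            simpa using norm_sub_le_norm_sub_add_norm_sub
              ((‖x i (j i)‖)⁻¹ • x i (j i)) (a i) L
        _ ≤ 1 / (i + 1) + ‖a i - L‖ := by
            exact add_le_add (hj2 i).le le_rfl
    have := hdiff.add (tendsto_const_nhds (x := L))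
    simpa using this

theorem stmt8 (n : ℕ) (A : Set (E n)) (h0 : (0 : E n) ∈ closure (A \ {0})) :
    SSP n (LD n A) := by
  intro a ha0 haT hL ε hε
  obtain ⟨L, hLmem, hLt⟩ := hL
  obtain ⟨hL1, u, hu, hu0, hud⟩ := hLmem
  have hc : ∀ i, ∃ c ∈ Dir n A, (‖u i‖)⁻¹ • u i = c := by
    intro i
    obtain ⟨hui, hne⟩ := hu i
    obtain ⟨c, hcmem, t, ht, hut⟩ := hui
    refine ⟨c, hcmem, ?_⟩
    have hc1 : ‖c‖ = 1 := hcmem.1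
    have htne : t ≠ 0 := by
      rintro rfl
      exact hne (by simp [hut])
    have hnu : ‖u i‖ = t := by
      rw [hut, norm_smul, hc1, Real.norm_of_nonneg ht, mul_one]
    rw [hnu, hut, smul_smul, inv_mul_cancel₀ htne, one_smul]
  choose c hcA hceq using hc
  have hcL : Tendsto c atTop (nhds L) := by
    have : (fun i => (‖u i‖)⁻¹ • u i) = c := funext hceq
    rwa [this] at hud
  have hLA : L ∈ Dir n A := dir_limit hcA hcL
  refine ⟨fun m => ‖a m‖ • L, fun m => ⟨L, hLA, ‖a m‖, norm_nonneg _, rfl⟩, ?_⟩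
  have hLn : ‖L‖ = 1 := hLA.1
  have hnb : ∀ m, ‖‖a m‖ • L‖ = ‖a m‖ := by
    intro m; rw [norm_smul, hLn, mul_one, norm_norm]
  have hev : ∀ᶠ m in atTop, ‖(‖a m‖)⁻¹ • a m - L‖ ≤ ε := by
    have := Metric.tendsto_nhds.mp hLt ε hε
    filter_upwards [this] with m hm
    rw [dist_eq_norm] at hm; exact hm.le
  filter_upwards [hev] with m hm
  have ham : a m - ‖a m‖ • L = ‖a m‖ • ((‖a m‖)⁻¹ • a m - L) := by
    rw [smul_sub, smul_smul, mul_inv_cancel₀ (norm_ne_zero_iff.mpr (ha0 m)), one_smul]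
  rw [ham, norm_smul, norm_norm, hnb m, min_self]
  calc ‖a m‖ * ‖(‖a m‖)⁻¹ • a m - L‖ ≤ ‖a m‖ * ε :=
        mul_le_mul_of_nonneg_left hm (norm_nonneg _)
    _ = ε * ‖a m‖ := mul_comm _ _
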